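/- W(K_{14}) = 21: the complete graph on 14 vertices has an interval 21-coloring but no interval 22-coloring. -/

import Mathlib

/-- An interval `t`-coloring of the complete graph on `Fin m`:
a proper edge-coloring with colors in `{1,…,t}`, using every color,
such that the spectrum (set of colors incident to each vertex) is an
interval of consecutive integers. -/
def IsIntervalColoring (m t : ℕ) (c : Sym2 (Fin m) → ℕ) : Prop :=
  (∀ u v w : Fin m, u ≠ v → u ≠ w → v ≠ w → c s(u, v) ≠ c s(u, w)) ∧
  (∀ u v : Fin m, u ≠ v → c s(u, v) ∈ Finset.Icc 1 t) ∧
  (∀ k : ℕ, 1 ≤ k → k ≤ t → ∃ u v : Fin m, u ≠ v ∧ c s(u, v) = k) ∧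
  (∀ v : Fin m, ∃ a b : ℕ,
    {k : ℕ | ∃ u : Fin m, u ≠ v ∧ c s(u, v) = k} = Set.Icc a b)

/-- `W m` is the greatest `t` for which the complete graph on `m` vertices
has an interval `t`-coloring. -/
noncomputable def W (m : ℕ) : ℕ :=
  sSup {t : ℕ | ∃ c : Sym2 (Fin m) → ℕ, IsIntervalColoring m t c}

open Finset



lemma even_of_involution {α : Type*} [DecidableEq α] (s : Finset α) (f : α → α)
    (h1 : ∀ x ∈ s, f x ∈ s) (h2 : ∀ x ∈ s, f x ≠ x) (h3 : ∀ x ∈ s, f (f x) = x) :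
    Even s.card := by
  induction s using Finset.strongInduction with
  | _ s ih =>
    rcases s.eq_empty_or_nonempty with rfl | ⟨v, hv⟩
    · simp
    · have hfv := h1 v hv
      have hne := h2 v hv
      set s' := (s.erase v).erase (f v) with hs'
      have hfve : f v ∈ s.erase v := Finset.mem_erase.2 ⟨hne, hfv⟩
      have hss : s' ⊂ s :=
        Finset.ssubset_of_subset_of_ssubset (Finset.erase_subset _ _) (Finset.erase_ssubset hv)
      have hmem : ∀ x ∈ s', x ∈ s := fun x hx =>
        Finset.mem_of_mem_erase (Finset.mem_of_mem_erase hx)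
      have e1 : (s.erase v).card = s.card - 1 := Finset.card_erase_of_mem hv
      have e2 : s'.card = (s.erase v).card - 1 := Finset.card_erase_of_mem hfve
      have hpos : 0 < (s.erase v).card := Finset.card_pos.2 ⟨f v, hfve⟩
      have hpos2 : 0 < s.card := Finset.card_pos.2 ⟨v, hv⟩
      have hE : Even s'.card := by
        apply ih s' hss
        · intro x hx
          have hxs := hmem x hx
          have h1x := h1 x hxs
          rw [hs'] at hx ⊢
          simp only [Finset.mem_erase] at hx ⊢
          refine ⟨?_, ?_, h1x⟩
          · intro hcon
            exact hx.2.1 (by rw [← h3 x hxs, hcon, h3 v hv])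
          · intro hcon
            exact hx.1 (by rw [← hcon, h3 x hxs])
        · intro x hx; exact h2 x (hmem x hx)
        · intro x hx; exact h3 x (hmem x hx)
      obtain ⟨k, hk⟩ := hE
      exact ⟨k + 1, by omega⟩

namespace IC

def spec (c : Sym2 (Fin 14) → ℕ) (v : Fin 14) : Finset ℕ :=
  (Finset.univ.erase v).image fun u => c s(u, v)

lemma mem_spec {c : Sym2 (Fin 14) → ℕ} {v : Fin 14} {k : ℕ} :
    k ∈ spec c v ↔ ∃ u, u ≠ v ∧ c s(u, v) = k := by
  simp only [spec, Finset.mem_image, Finset.mem_erase, Finset.mem_univ, and_true]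

variable {t : ℕ} {c : Sym2 (Fin 14) → ℕ}

lemma spec_card (h : IsIntervalColoring 14 t c) (v : Fin 14) : (spec c v).card = 13 := by
  rw [spec, Finset.card_image_of_injOn, Finset.card_erase_of_mem (Finset.mem_univ v)]
  · simp
  · intro u1 h1 u2 h2 hne
    by_contra hcon
    rw [Finset.mem_coe, Finset.mem_erase] at h1 h2
    exact h.1 v u1 u2 (Ne.symm h1.1) (Ne.symm h2.1) hcon
      (by rw [Sym2.eq_swap (a := v) (b := u1), Sym2.eq_swap (a := v) (b := u2)]; exact hne)

lemma exists_base (h : IsIntervalColoring 14 t c) :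
    ∃ A : Fin 14 → ℕ, ∀ v, spec c v = Finset.Icc (A v) (A v + 12) ∧
      1 ≤ A v ∧ A v + 12 ≤ t := by
  have key : ∀ v : Fin 14, ∃ a : ℕ, spec c v = Finset.Icc a (a + 12) ∧ 1 ≤ a ∧ a + 12 ≤ t := by
    intro v
    obtain ⟨a, b, hab⟩ := h.2.2.2 v
    have hcoe : (↑(spec c v) : Set ℕ) = Set.Icc a b := by
      rw [← hab]; ext k; simp [mem_spec]
    have hfin : spec c v = Finset.Icc a b := by
      apply Finset.coe_injective
      rw [hcoe, Finset.coe_Icc]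
    have hcard := spec_card h v
    rw [hfin, Nat.card_Icc] at hcard
    have hb : b = a + 12 := by omega
    subst hb
    refine ⟨a, hfin, ?_, ?_⟩
    · have ha : a ∈ spec c v := by rw [hfin]; simp
      obtain ⟨u, hu, hcu⟩ := mem_spec.1 ha
      have := h.2.1 u v hu
      rw [hcu, Finset.mem_Icc] at this
      exact this.1
    · have ha : a + 12 ∈ spec c v := by rw [hfin]; simp
      obtain ⟨u, hu, hcu⟩ := mem_spec.1 ha
      have := h.2.1 u v hu
      rw [hcu, Finset.mem_Icc] at this
      exact this.2
  choose A hA using key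
  exact ⟨A, hA⟩

-- membership facts given a base function
lemma color_mem (h : IsIntervalColoring 14 t c) {A : Fin 14 → ℕ}
    (hA : ∀ v, spec c v = Finset.Icc (A v) (A v + 12))
    {u v : Fin 14} (huv : u ≠ v) :
    A v ≤ c s(u, v) ∧ c s(u, v) ≤ A v + 12 ∧ A u ≤ c s(u, v) ∧ c s(u, v) ≤ A u + 12 := by
  have h1 : c s(u, v) ∈ spec c v := mem_spec.2 ⟨u, huv, rfl⟩
  have h2 : c s(u, v) ∈ spec c u := mem_spec.2 ⟨v, Ne.symm huv, by rw [Sym2.eq_swap]⟩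
  rw [hA v, Finset.mem_Icc] at h1
  rw [hA u, Finset.mem_Icc] at h2
  exact ⟨h1.1, h1.2, h2.1, h2.2⟩

lemma exists_partner (h : IsIntervalColoring 14 t c) {A : Fin 14 → ℕ}
    (hA : ∀ v, spec c v = Finset.Icc (A v) (A v + 12))
    {v : Fin 14} {k : ℕ} (hk1 : A v ≤ k) (hk2 : k ≤ A v + 12) :
    ∃ u, u ≠ v ∧ c s(u, v) = k := by
  have : k ∈ spec c v := by rw [hA v, Finset.mem_Icc]; exact ⟨hk1, hk2⟩
  exact mem_spec.1 this

lemma partner_unique (h : IsIntervalColoring 14 t c)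
    {v u1 u2 : Fin 14} (h1 : u1 ≠ v) (h2 : u2 ≠ v)
    (he : c s(u1, v) = c s(u2, v)) : u1 = u2 := by
  by_contra hcon
  exact h.1 v u1 u2 (Ne.symm h1) (Ne.symm h2) hcon
    (by rw [Sym2.eq_swap (a := v) (b := u1), Sym2.eq_swap (a := v) (b := u2)]; exact he)

end IC

open IC in

lemma descent {t : ℕ} (ht : 13 ≤ t) {c : Sym2 (Fin 14) → ℕ}
    (h : IsIntervalColoring 14 (t + 1) c) :
    ∃ c' : Sym2 (Fin 14) → ℕ, IsIntervalColoring 14 t c' := by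
  obtain ⟨A, hA⟩ := IC.exists_base h
  have hAspec : ∀ v, spec c v = Finset.Icc (A v) (A v + 12) := fun v => (hA v).1
  have hA1 : ∀ v, 1 ≤ A v := fun v => (hA v).2.1
  have hAt : ∀ v, A v + 12 ≤ t + 1 := fun v => (hA v).2.2
  have hmax : ∀ u v : Fin 14, u ≠ v → c s(u, v) = t + 1 → A v = t - 11 := by
    intro u v huv hcv
    have h1 := hAt v
    have := color_mem h hAspec huv
    omega
  refine ⟨fun e => if c e = t + 1 then t - 12 else c e, ?_, ?_, ?_, ?_⟩
  · intro u v w huv huw hvw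
    simp only
    by_cases h1 : c s(u, v) = t + 1 <;> by_cases h2 : c s(u, w) = t + 1
    · exact absurd (h1.trans h2.symm) (h.1 u v w huv huw hvw)
    · rw [if_pos h1, if_neg h2]
      have hu : A u = t - 11 := by
        have h3 := hAt u
        have := color_mem h hAspec huv
        omega
      have h4 := hA1 u
      have := color_mem h hAspec huw
      omega
    · rw [if_neg h1, if_pos h2]
      have hu : A u = t - 11 := by
        have h3 := hAt u
        have := color_mem h hAspec huw
        omega
      have h4 := hA1 u
      have := color_mem h hAspec huv
      omega
    · rw [if_neg h1, if_neg h2]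
      exact h.1 u v w huv huw hvw
  · intro u v huv
    simp only [Finset.mem_Icc]
    have := h.2.1 u v huv
    rw [Finset.mem_Icc] at this
    split_ifs with h1 <;> omega
  · intro k hk1 hk2
    obtain ⟨u, v, huv, hcuv⟩ := h.2.2.1 k hk1 (by omega)
    refine ⟨u, v, huv, ?_⟩
    show (if c s(u, v) = t + 1 then t - 12 else c s(u, v)) = k
    rw [hcuv, if_neg (by omega)]
  · intro v
    by_cases hsp : t + 1 ∈ spec c v
    · have hv11 : A v = t - 11 := by
        have h1 := hAt v
        rw [hAspec v, Finset.mem_Icc] at hsp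
        omega
      refine ⟨t - 12, t, ?_⟩
      ext k
      simp only [Set.mem_setOf_eq, Set.mem_Icc]
      constructor
      · rintro ⟨u, hu, hk⟩
        have h9 := hAt u
        have := color_mem h hAspec hu
        split_ifs at hk <;> omega
      · rintro ⟨hk1, hk2⟩
        by_cases hklow : k = t - 12
        · obtain ⟨u, hu, hcu⟩ := mem_spec.1 hsp
          refine ⟨u, hu, ?_⟩
          show (if c s(u, v) = t + 1 then t - 12 else c s(u, v)) = k
          rw [if_pos hcu, hklow]
        · obtain ⟨u, hu, hcu⟩ := exists_partner h hAspec (v := v) (k := k)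
            (by omega) (by omega)
          refine ⟨u, hu, ?_⟩
          show (if c s(u, v) = t + 1 then t - 12 else c s(u, v)) = k
          rw [hcu, if_neg (by omega)]
    · have hkeep : ∀ u : Fin 14, u ≠ v →
          (if c s(u, v) = t + 1 then t - 12 else c s(u, v)) = c s(u, v) := by
        intro u hu
        exact if_neg (fun hcon => hsp (mem_spec.2 ⟨u, hu, hcon⟩))
      refine ⟨A v, A v + 12, ?_⟩
      ext k
      simp only [Set.mem_setOf_eq, Set.mem_Icc]
      constructor
      · rintro ⟨u, hu, hk⟩
        rw [hkeep u hu] at hk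
        have : k ∈ spec c v := mem_spec.2 ⟨u, hu, hk⟩
        rw [hAspec v, Finset.mem_Icc] at this
        exact this
      · rintro ⟨hk1, hk2⟩
        obtain ⟨u, hu, hcu⟩ := exists_partner h hAspec (v := v) (k := k) hk1 hk2
        refine ⟨u, hu, ?_⟩
        show (if c s(u, v) = t + 1 then t - 12 else c s(u, v)) = k
        rw [hkeep u hu, hcu]


def pp (A : Fin 14 → ℕ) (j : ℕ) : ℕ := (Finset.univ.filter (fun v => A v ≤ j)).card

def cross (c : Sym2 (Fin 14) → ℕ) (A : Fin 14 → ℕ) (j k : ℕ) : Finset (Fin 14 × Fin 14) :=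
  ((Finset.univ.filter (fun v => A v ≤ j)) ×ˢ (Finset.univ.filter (fun v => ¬ A v ≤ j))).filter
    (fun q => c s(q.1, q.2) = k)

set_option maxHeartbeats 4000000 in
open IC in
lemma no22 (c : Sym2 (Fin 14) → ℕ) : ¬ IsIntervalColoring 14 22 c := by
  classical
  intro h
  obtain ⟨A, hA⟩ := IC.exists_base h
  have hAspec : ∀ v, spec c v = Finset.Icc (A v) (A v + 12) := fun v => (hA v).1
  have hA1 : ∀ v, 1 ≤ A v := fun v => (hA v).2.1
  have hA10 : ∀ v, A v ≤ 10 := fun v => by have := (hA v).2.2; omega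
  set p : ℕ → ℕ := pp A with hp
  have hp0 : p 0 = 0 := by
    simp only [hp, pp]
    simp only [Finset.card_eq_zero]
    apply Finset.eq_empty_of_forall_notMem
    intro v hv
    rw [Finset.mem_filter] at hv
    have := hA1 v
    omega
  have hpge : ∀ j, 10 ≤ j → p j = 14 := by
    intro j hj
    simp only [hp, pp]
    have : (Finset.univ.filter (fun v : Fin 14 => A v ≤ j)) = Finset.univ := by
      apply Finset.filter_true_of_mem
      intro v _
      have := hA10 v
      omega
    rw [this]
    simp
  have hmono : ∀ i j : ℕ, i ≤ j → p i ≤ p j := by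
    intro i j hij
    apply Finset.card_le_card
    intro v hv
    rw [Finset.mem_filter] at hv ⊢
    exact ⟨hv.1, le_trans hv.2 hij⟩
  have hcardT : ∀ j : ℕ,
      p j + (Finset.univ.filter (fun v => ¬ A v ≤ j)).card = 14 := by
    intro j
    simp only [hp, pp]
    rw [Finset.card_filter_add_card_filter_not]
    simp
  have hband : ∀ m l : ℕ, m ≤ l →
      (Finset.univ.filter (fun v => ¬ A v ≤ m ∧ A v ≤ l)).card + p m = p l := by
    intro m l hml
    have h1 := Finset.card_filter_add_card_filter_not
      (s := Finset.univ.filter (fun v : Fin 14 => A v ≤ l)) (p := fun v => A v ≤ m)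
    rw [Finset.filter_filter, Finset.filter_filter] at h1
    have e1 : (Finset.univ.filter (fun v : Fin 14 => A v ≤ l ∧ A v ≤ m))
        = Finset.univ.filter (fun v => A v ≤ m) := by
      apply Finset.filter_congr
      intro v _
      constructor
      · exact fun hx => hx.2
      · exact fun hx => ⟨le_trans hx hml, hx⟩
    have e2 : (Finset.univ.filter (fun v : Fin 14 => A v ≤ l ∧ ¬ A v ≤ m))
        = Finset.univ.filter (fun v => ¬ A v ≤ m ∧ A v ≤ l) := by
      apply Finset.filter_congr
      intro v _
      tauto
    rw [e1, e2] at h1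
    simp only [hp, pp]
    omega
  -- existence of extreme vertices
  have hv1 : ∃ v : Fin 14, A v = 1 := by
    obtain ⟨u, v, huv, hcuv⟩ := h.2.2.1 1 le_rfl (by norm_num)
    have := color_mem h hAspec huv
    have := hA1 v
    exact ⟨v, by omega⟩
  have hv10 : ∃ v : Fin 14, A v = 10 := by
    obtain ⟨u, v, huv, hcuv⟩ := h.2.2.1 22 (by norm_num) le_rfl
    have := color_mem h hAspec huv
    have := hA10 v
    exact ⟨v, by omega⟩
  -- degree bounds
  have hdegL : ∀ j : ℕ, 1 ≤ j → j ≤ 9 → j + 1 ≤ p j := by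
    intro j h1j h9j
    obtain ⟨v1, hv1e⟩ := hv1
    have hinj : (Finset.univ.filter (fun v => ¬ A v ≤ j)).card ≤
        (Finset.Icc (j + 1) 13).card := by
      apply Finset.card_le_card_of_injOn (fun w => c s(w, v1))
      · intro w hw
        rw [Finset.mem_coe, Finset.mem_filter] at hw
        have hwv : w ≠ v1 := by
          intro hcon
          rw [hcon, hv1e] at hw
          omega
        have := color_mem h hAspec hwv
        simp only [Finset.mem_coe, Finset.mem_Icc]
        omega
      · intro w1 hw1 w2 hw2 heq
        rw [Finset.mem_coe, Finset.mem_filter] at hw1 hw2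
        have hwv1 : w1 ≠ v1 := by
          intro hcon; rw [hcon, hv1e] at hw1; omega
        have hwv2 : w2 ≠ v1 := by
          intro hcon; rw [hcon, hv1e] at hw2; omega
        exact partner_unique h hwv1 hwv2 heq
    rw [Nat.card_Icc] at hinj
    have := hcardT j
    omega
  have hdegU : ∀ j : ℕ, 1 ≤ j → j ≤ 9 → p j ≤ j + 3 := by
    intro j h1j h9j
    obtain ⟨v0, hv0e⟩ := hv10
    have hinj : (Finset.univ.filter (fun v => A v ≤ j)).card ≤
        (Finset.Icc 10 (j + 12)).card := by
      apply Finset.card_le_card_of_injOn (fun w => c s(w, v0))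
      · intro w hw
        rw [Finset.mem_coe, Finset.mem_filter] at hw
        have hwv : w ≠ v0 := by
          intro hcon
          rw [hcon, hv0e] at hw
          omega
        have := color_mem h hAspec hwv
        simp only [Finset.mem_coe, Finset.mem_Icc]
        omega
      · intro w1 hw1 w2 hw2 heq
        rw [Finset.mem_coe, Finset.mem_filter] at hw1 hw2
        have hwv1 : w1 ≠ v0 := by
          intro hcon; rw [hcon, hv0e] at hw1; omega
        have hwv2 : w2 ≠ v0 := by
          intro hcon; rw [hcon, hv0e] at hw2; omega
        exact partner_unique h hwv1 hwv2 heq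
    rw [Nat.card_Icc] at hinj
    simp only [hp, pp]
    omega
  -- parity
  have hpar : ∀ j : ℕ, 1 ≤ j → j ≤ 9 → Even (p j) := by
    intro j h1j h9j
    simp only [hp, pp]
    have hex : ∀ v : Fin 14, A v ≤ j → ∃ u, u ≠ v ∧ c s(u, v) = j := by
      intro v hv
      exact exists_partner h hAspec hv (by have := hA1 v; omega)
    set f : Fin 14 → Fin 14 :=
      fun v => if hx : ∃ u, u ≠ v ∧ c s(u, v) = j then hx.choose else v with hf
    have hfspec : ∀ v : Fin 14, A v ≤ j → f v ≠ v ∧ c s(f v, v) = j := by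
      intro v hv
      rw [hf]
      simp only [dif_pos (hex v hv)]
      exact (hex v hv).choose_spec
    apply even_of_involution _ f
    · intro v hv
      rw [Finset.mem_filter] at hv ⊢
      obtain ⟨hne, hcv⟩ := hfspec v hv.2
      have := color_mem h hAspec hne
      refine ⟨Finset.mem_univ _, by omega⟩
    · intro v hv
      rw [Finset.mem_filter] at hv
      exact (hfspec v hv.2).1
    · intro v hv
      rw [Finset.mem_filter] at hv
      obtain ⟨hne, hcv⟩ := hfspec v hv.2
      have hAfv : A (f v) ≤ j := by
        have := color_mem h hAspec hne
        omega
      obtain ⟨hne2, hcv2⟩ := hfspec (f v) hAfv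
      apply partner_unique h (v := f v) hne2 (Ne.symm hne)
      rw [hcv2, Sym2.eq_swap]
      exact hcv.symm
  -- cut machinery
  have hcrossmem : ∀ j k : ℕ, ∀ q : Fin 14 × Fin 14, q ∈ cross c A j k →
      A q.1 ≤ j ∧ ¬ A q.2 ≤ j ∧ q.1 ≠ q.2 ∧ c s(q.1, q.2) = k := by
    intro j k q hq
    simp only [cross, Finset.mem_filter, Finset.mem_product, Finset.mem_univ,
      true_and] at hq
    refine ⟨hq.1.1, hq.1.2, ?_, hq.2⟩
    intro hcon
    rw [hcon] at hq
    exact hq.1.2 hq.1.1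
  have hzlo : ∀ j k : ℕ, k ≤ j → (cross c A j k).card = 0 := by
    intro j k hkj
    rw [Finset.card_eq_zero]
    apply Finset.eq_empty_of_forall_notMem
    intro q hq
    obtain ⟨h1, h2, h3, h4⟩ := hcrossmem j k q hq
    have := color_mem h hAspec h3
    omega
  have hzhi : ∀ j k : ℕ, j + 13 ≤ k → (cross c A j k).card = 0 := by
    intro j k hkj
    rw [Finset.card_eq_zero]
    apply Finset.eq_empty_of_forall_notMem
    intro q hq
    obtain ⟨h1, h2, h3, h4⟩ := hcrossmem j k q hq
    have := color_mem h hAspec h3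
    omega
  have hcS : ∀ j k : ℕ, j + 1 ≤ k → k ≤ j + 12 →
      (cross c A j k).card + p (k - 13) ≤ p j := by
    intro j k hk1 hk2
    have hb := hband (k - 13) j (by omega)
    have hle : (cross c A j k).card ≤
        (Finset.univ.filter (fun v => ¬ A v ≤ k - 13 ∧ A v ≤ j)).card := by
      apply Finset.card_le_card_of_injOn (fun q => q.1)
      · intro q hq
        obtain ⟨h1, h2, h3, h4⟩ := hcrossmem j k q hq
        have := color_mem h hAspec h3
        have := hA1 q.1
        simp only [Finset.mem_coe, Finset.mem_filter]
        exact ⟨Finset.mem_univ _, by omega, h1⟩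
      · intro q1 hq1 q2 hq2 heq
        rw [Finset.mem_coe] at hq1 hq2
        obtain ⟨a1, b1, n1, c1⟩ := hcrossmem j k q1 hq1
        obtain ⟨a2, b2, n2, c2⟩ := hcrossmem j k q2 hq2
        have heq' : q1.1 = q2.1 := heq
        have hsnd : q1.2 = q2.2 := by
          by_contra hcon
          have hn2' : q1.1 ≠ q2.2 := by rw [heq']; exact n2
          have hcc : c s(q1.1, q1.2) = c s(q1.1, q2.2) := by
            rw [c1, heq', c2]
          exact h.1 q1.1 q1.2 q2.2 n1 hn2' hcon hcc
        exact Prod.ext heq' hsnd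
    omega
  have hcT : ∀ j k : ℕ, j + 1 ≤ k → k ≤ j + 12 →
      (cross c A j k).card + p j ≤ p k := by
    intro j k hk1 hk2
    have hb := hband j k (by omega)
    have hle : (cross c A j k).card ≤
        (Finset.univ.filter (fun v => ¬ A v ≤ j ∧ A v ≤ k)).card := by
      apply Finset.card_le_card_of_injOn (fun q => q.2)
      · intro q hq
        obtain ⟨h1, h2, h3, h4⟩ := hcrossmem j k q hq
        have := color_mem h hAspec h3
        simp only [Finset.mem_coe, Finset.mem_filter]
        exact ⟨Finset.mem_univ _, h2, by omega⟩
      · intro q1 hq1 q2 hq2 heq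
        rw [Finset.mem_coe] at hq1 hq2
        obtain ⟨a1, b1, n1, c1⟩ := hcrossmem j k q1 hq1
        obtain ⟨a2, b2, n2, c2⟩ := hcrossmem j k q2 hq2
        have heq' : q1.2 = q2.2 := heq
        have hfst : q1.1 = q2.1 := by
          apply partner_unique h (v := q1.2) n1 (by rw [heq']; exact n2)
          rw [c1, heq', c2]
        exact Prod.ext hfst heq'
    omega
  have hsum : ∀ j : ℕ,
      ∑ k ∈ Finset.range 23, (cross c A j k).card = p j * (14 - p j) := by
    intro j
    have hfib := Finset.card_eq_sum_card_fiberwise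
      (s := (Finset.univ.filter (fun v => A v ≤ j)) ×ˢ
            (Finset.univ.filter (fun v => ¬ A v ≤ j)))
      (t := Finset.range 23) (f := fun q => c s(q.1, q.2)) ?_
    · have hc2 : (Finset.univ.filter (fun v : Fin 14 => ¬ A v ≤ j)).card = 14 - p j := by
        have := hcardT j
        omega
      rw [Finset.card_product, hc2] at hfib
      have hc1 : (Finset.univ.filter (fun v : Fin 14 => A v ≤ j)).card = p j := by
        simp only [hp, pp]
      rw [hc1] at hfib
      exact hfib.symm
    · intro q hq
      simp only [Finset.mem_coe, Finset.mem_product, Finset.mem_filter, Finset.mem_univ, true_and] at hq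
      have hne : q.1 ≠ q.2 := by
        intro hcon
        rw [hcon] at hq
        exact hq.2 hq.1
      have := h.2.1 q.1 q.2 hne
      rw [Finset.mem_Icc] at this
      change c s(q.1, q.2) ∈ Finset.range 23
      rw [Finset.mem_range]
      omega
  -- instantiate everything and finish
  clear_value p
  have hs3 := hsum 3
  have hs5 := hsum 5
  have hs7 := hsum 7
  simp only [Finset.sum_range_succ, Finset.sum_range_zero] at hs3 hs5 hs7
  have z3_0 := hzlo 3 0 (by norm_num)
  have z3_1 := hzlo 3 1 (by norm_num)
  have z3_2 := hzlo 3 2 (by norm_num)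
  have z3_3 := hzlo 3 3 (by norm_num)
  have z3_16 := hzhi 3 16 (by norm_num)
  have z3_17 := hzhi 3 17 (by norm_num)
  have z3_18 := hzhi 3 18 (by norm_num)
  have z3_19 := hzhi 3 19 (by norm_num)
  have z3_20 := hzhi 3 20 (by norm_num)
  have z3_21 := hzhi 3 21 (by norm_num)
  have z3_22 := hzhi 3 22 (by norm_num)
  have s3_4 : (cross c A 3 4).card + p 0 ≤ p 3 := by have := hcS 3 4 (by norm_num) (by norm_num); norm_num at this ⊢; omega
  have t3_4 := hcT 3 4 (by norm_num) (by norm_num)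
  have s3_5 : (cross c A 3 5).card + p 0 ≤ p 3 := by have := hcS 3 5 (by norm_num) (by norm_num); norm_num at this ⊢; omega
  have t3_5 := hcT 3 5 (by norm_num) (by norm_num)
  have s3_6 : (cross c A 3 6).card + p 0 ≤ p 3 := by have := hcS 3 6 (by norm_num) (by norm_num); norm_num at this ⊢; omega
  have t3_6 := hcT 3 6 (by norm_num) (by norm_num)
  have s3_7 : (cross c A 3 7).card + p 0 ≤ p 3 := by have := hcS 3 7 (by norm_num) (by norm_num); norm_num at this ⊢; omega
  have t3_7 := hcT 3 7 (by norm_num) (by norm_num)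
  have s3_8 : (cross c A 3 8).card + p 0 ≤ p 3 := by have := hcS 3 8 (by norm_num) (by norm_num); norm_num at this ⊢; omega
  have t3_8 := hcT 3 8 (by norm_num) (by norm_num)
  have s3_9 : (cross c A 3 9).card + p 0 ≤ p 3 := by have := hcS 3 9 (by norm_num) (by norm_num); norm_num at this ⊢; omega
  have t3_9 := hcT 3 9 (by norm_num) (by norm_num)
  have s3_10 : (cross c A 3 10).card + p 0 ≤ p 3 := by have := hcS 3 10 (by norm_num) (by norm_num); norm_num at this ⊢; omega
  have t3_10 := hcT 3 10 (by norm_num) (by norm_num)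
  have s3_11 : (cross c A 3 11).card + p 0 ≤ p 3 := by have := hcS 3 11 (by norm_num) (by norm_num); norm_num at this ⊢; omega
  have t3_11 := hcT 3 11 (by norm_num) (by norm_num)
  have s3_12 : (cross c A 3 12).card + p 0 ≤ p 3 := by have := hcS 3 12 (by norm_num) (by norm_num); norm_num at this ⊢; omega
  have t3_12 := hcT 3 12 (by norm_num) (by norm_num)
  have s3_13 : (cross c A 3 13).card + p 0 ≤ p 3 := by have := hcS 3 13 (by norm_num) (by norm_num); norm_num at this ⊢; omega
  have t3_13 := hcT 3 13 (by norm_num) (by norm_num)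
  have s3_14 : (cross c A 3 14).card + p 1 ≤ p 3 := by have := hcS 3 14 (by norm_num) (by norm_num); norm_num at this ⊢; omega
  have t3_14 := hcT 3 14 (by norm_num) (by norm_num)
  have s3_15 : (cross c A 3 15).card + p 2 ≤ p 3 := by have := hcS 3 15 (by norm_num) (by norm_num); norm_num at this ⊢; omega
  have t3_15 := hcT 3 15 (by norm_num) (by norm_num)
  have z5_0 := hzlo 5 0 (by norm_num)
  have z5_1 := hzlo 5 1 (by norm_num)
  have z5_2 := hzlo 5 2 (by norm_num)
  have z5_3 := hzlo 5 3 (by norm_num)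
  have z5_4 := hzlo 5 4 (by norm_num)
  have z5_5 := hzlo 5 5 (by norm_num)
  have z5_18 := hzhi 5 18 (by norm_num)
  have z5_19 := hzhi 5 19 (by norm_num)
  have z5_20 := hzhi 5 20 (by norm_num)
  have z5_21 := hzhi 5 21 (by norm_num)
  have z5_22 := hzhi 5 22 (by norm_num)
  have s5_6 : (cross c A 5 6).card + p 0 ≤ p 5 := by have := hcS 5 6 (by norm_num) (by norm_num); norm_num at this ⊢; omega
  have t5_6 := hcT 5 6 (by norm_num) (by norm_num)
  have s5_7 : (cross c A 5 7).card + p 0 ≤ p 5 := by have := hcS 5 7 (by norm_num) (by norm_num); norm_num at this ⊢; omega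
  have t5_7 := hcT 5 7 (by norm_num) (by norm_num)
  have s5_8 : (cross c A 5 8).card + p 0 ≤ p 5 := by have := hcS 5 8 (by norm_num) (by norm_num); norm_num at this ⊢; omega
  have t5_8 := hcT 5 8 (by norm_num) (by norm_num)
  have s5_9 : (cross c A 5 9).card + p 0 ≤ p 5 := by have := hcS 5 9 (by norm_num) (by norm_num); norm_num at this ⊢; omega
  have t5_9 := hcT 5 9 (by norm_num) (by norm_num)
  have s5_10 : (cross c A 5 10).card + p 0 ≤ p 5 := by have := hcS 5 10 (by norm_num) (by norm_num); norm_num at this ⊢; omega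
  have t5_10 := hcT 5 10 (by norm_num) (by norm_num)
  have s5_11 : (cross c A 5 11).card + p 0 ≤ p 5 := by have := hcS 5 11 (by norm_num) (by norm_num); norm_num at this ⊢; omega
  have t5_11 := hcT 5 11 (by norm_num) (by norm_num)
  have s5_12 : (cross c A 5 12).card + p 0 ≤ p 5 := by have := hcS 5 12 (by norm_num) (by norm_num); norm_num at this ⊢; omega
  have t5_12 := hcT 5 12 (by norm_num) (by norm_num)
  have s5_13 : (cross c A 5 13).card + p 0 ≤ p 5 := by have := hcS 5 13 (by norm_num) (by norm_num); norm_num at this ⊢; omega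
  have t5_13 := hcT 5 13 (by norm_num) (by norm_num)
  have s5_14 : (cross c A 5 14).card + p 1 ≤ p 5 := by have := hcS 5 14 (by norm_num) (by norm_num); norm_num at this ⊢; omega
  have t5_14 := hcT 5 14 (by norm_num) (by norm_num)
  have s5_15 : (cross c A 5 15).card + p 2 ≤ p 5 := by have := hcS 5 15 (by norm_num) (by norm_num); norm_num at this ⊢; omega
  have t5_15 := hcT 5 15 (by norm_num) (by norm_num)
  have s5_16 : (cross c A 5 16).card + p 3 ≤ p 5 := by have := hcS 5 16 (by norm_num) (by norm_num); norm_num at this ⊢; omega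
  have t5_16 := hcT 5 16 (by norm_num) (by norm_num)
  have s5_17 : (cross c A 5 17).card + p 4 ≤ p 5 := by have := hcS 5 17 (by norm_num) (by norm_num); norm_num at this ⊢; omega
  have t5_17 := hcT 5 17 (by norm_num) (by norm_num)
  have z7_0 := hzlo 7 0 (by norm_num)
  have z7_1 := hzlo 7 1 (by norm_num)
  have z7_2 := hzlo 7 2 (by norm_num)
  have z7_3 := hzlo 7 3 (by norm_num)
  have z7_4 := hzlo 7 4 (by norm_num)
  have z7_5 := hzlo 7 5 (by norm_num)
  have z7_6 := hzlo 7 6 (by norm_num)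
  have z7_7 := hzlo 7 7 (by norm_num)
  have z7_20 := hzhi 7 20 (by norm_num)
  have z7_21 := hzhi 7 21 (by norm_num)
  have z7_22 := hzhi 7 22 (by norm_num)
  have s7_8 : (cross c A 7 8).card + p 0 ≤ p 7 := by have := hcS 7 8 (by norm_num) (by norm_num); norm_num at this ⊢; omega
  have t7_8 := hcT 7 8 (by norm_num) (by norm_num)
  have s7_9 : (cross c A 7 9).card + p 0 ≤ p 7 := by have := hcS 7 9 (by norm_num) (by norm_num); norm_num at this ⊢; omega
  have t7_9 := hcT 7 9 (by norm_num) (by norm_num)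
  have s7_10 : (cross c A 7 10).card + p 0 ≤ p 7 := by have := hcS 7 10 (by norm_num) (by norm_num); norm_num at this ⊢; omega
  have t7_10 := hcT 7 10 (by norm_num) (by norm_num)
  have s7_11 : (cross c A 7 11).card + p 0 ≤ p 7 := by have := hcS 7 11 (by norm_num) (by norm_num); norm_num at this ⊢; omega
  have t7_11 := hcT 7 11 (by norm_num) (by norm_num)
  have s7_12 : (cross c A 7 12).card + p 0 ≤ p 7 := by have := hcS 7 12 (by norm_num) (by norm_num); norm_num at this ⊢; omega
  have t7_12 := hcT 7 12 (by norm_num) (by norm_num)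
  have s7_13 : (cross c A 7 13).card + p 0 ≤ p 7 := by have := hcS 7 13 (by norm_num) (by norm_num); norm_num at this ⊢; omega
  have t7_13 := hcT 7 13 (by norm_num) (by norm_num)
  have s7_14 : (cross c A 7 14).card + p 1 ≤ p 7 := by have := hcS 7 14 (by norm_num) (by norm_num); norm_num at this ⊢; omega
  have t7_14 := hcT 7 14 (by norm_num) (by norm_num)
  have s7_15 : (cross c A 7 15).card + p 2 ≤ p 7 := by have := hcS 7 15 (by norm_num) (by norm_num); norm_num at this ⊢; omega
  have t7_15 := hcT 7 15 (by norm_num) (by norm_num)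
  have s7_16 : (cross c A 7 16).card + p 3 ≤ p 7 := by have := hcS 7 16 (by norm_num) (by norm_num); norm_num at this ⊢; omega
  have t7_16 := hcT 7 16 (by norm_num) (by norm_num)
  have s7_17 : (cross c A 7 17).card + p 4 ≤ p 7 := by have := hcS 7 17 (by norm_num) (by norm_num); norm_num at this ⊢; omega
  have t7_17 := hcT 7 17 (by norm_num) (by norm_num)
  have s7_18 : (cross c A 7 18).card + p 5 ≤ p 7 := by have := hcS 7 18 (by norm_num) (by norm_num); norm_num at this ⊢; omega
  have t7_18 := hcT 7 18 (by norm_num) (by norm_num)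
  have s7_19 : (cross c A 7 19).card + p 6 ≤ p 7 := by have := hcS 7 19 (by norm_num) (by norm_num); norm_num at this ⊢; omega
  have t7_19 := hcT 7 19 (by norm_num) (by norm_num)
  have hge10 := hpge 10 (by norm_num)
  have hge11 := hpge 11 (by norm_num)
  have hge12 := hpge 12 (by norm_num)
  have hge13 := hpge 13 (by norm_num)
  have hge14 := hpge 14 (by norm_num)
  have hge15 := hpge 15 (by norm_num)
  have hge16 := hpge 16 (by norm_num)
  have hge17 := hpge 17 (by norm_num)
  have hge18 := hpge 18 (by norm_num)
  have hge19 := hpge 19 (by norm_num)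
  obtain ⟨m1, hm1⟩ := hpar 1 (by norm_num) (by norm_num)
  obtain ⟨m2, hm2⟩ := hpar 2 (by norm_num) (by norm_num)
  obtain ⟨m3, hm3⟩ := hpar 3 (by norm_num) (by norm_num)
  obtain ⟨m4, hm4⟩ := hpar 4 (by norm_num) (by norm_num)
  obtain ⟨m5, hm5⟩ := hpar 5 (by norm_num) (by norm_num)
  obtain ⟨m6, hm6⟩ := hpar 6 (by norm_num) (by norm_num)
  obtain ⟨m7, hm7⟩ := hpar 7 (by norm_num) (by norm_num)
  obtain ⟨m8, hm8⟩ := hpar 8 (by norm_num) (by norm_num)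
  obtain ⟨m9, hm9⟩ := hpar 9 (by norm_num) (by norm_num)
  have dL1 := hdegL 1 (by norm_num) (by norm_num)
  have dU1 := hdegU 1 (by norm_num) (by norm_num)
  have dL2 := hdegL 2 (by norm_num) (by norm_num)
  have dU2 := hdegU 2 (by norm_num) (by norm_num)
  have dL3 := hdegL 3 (by norm_num) (by norm_num)
  have dU3 := hdegU 3 (by norm_num) (by norm_num)
  have dL4 := hdegL 4 (by norm_num) (by norm_num)
  have dU4 := hdegU 4 (by norm_num) (by norm_num)
  have dL5 := hdegL 5 (by norm_num) (by norm_num)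
  have dU5 := hdegU 5 (by norm_num) (by norm_num)
  have dL6 := hdegL 6 (by norm_num) (by norm_num)
  have dU6 := hdegU 6 (by norm_num) (by norm_num)
  have dL7 := hdegL 7 (by norm_num) (by norm_num)
  have dU7 := hdegU 7 (by norm_num) (by norm_num)
  have dL8 := hdegL 8 (by norm_num) (by norm_num)
  have dU8 := hdegU 8 (by norm_num) (by norm_num)
  have dL9 := hdegL 9 (by norm_num) (by norm_num)
  have dU9 := hdegU 9 (by norm_num) (by norm_num)
  have mo1 := hmono 1 2 (by norm_num)
  have mo2 := hmono 2 3 (by norm_num)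
  have mo3 := hmono 3 4 (by norm_num)
  have mo4 := hmono 4 5 (by norm_num)
  have mo5 := hmono 5 6 (by norm_num)
  have mo6 := hmono 6 7 (by norm_num)
  have mo7 := hmono 7 8 (by norm_num)
  have mo8 := hmono 8 9 (by norm_num)
  have mo9 := hmono 9 10 (by norm_num)
  have hp3 : p 3 = 4 ∨ p 3 = 6 := by omega
  have hp5 : p 5 = 6 ∨ p 5 = 8 := by omega
  have hp7 : p 7 = 8 ∨ p 7 = 10 := by omega
  rcases hp3 with h3v | h3v <;> rcases hp5 with h5v | h5v <;> rcases hp7 with h7v | h7v <;>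
    rw [h3v] at hs3 <;> rw [h5v] at hs5 <;> rw [h7v] at hs7 <;>
    norm_num at hs3 hs5 hs7 <;> omega

def colTable : List (List ℕ) :=
  [[0, 1, 2, 3, 4, 7, 5, 6, 8, 13, 9, 10, 11, 12],
  [1, 0, 3, 2, 5, 4, 6, 7, 12, 8, 10, 13, 9, 11],
  [2, 3, 0, 4, 6, 5, 7, 8, 10, 12, 11, 9, 13, 14],
  [3, 2, 4, 0, 7, 6, 8, 5, 14, 9, 12, 11, 10, 13],
  [4, 5, 6, 7, 0, 8, 9, 10, 11, 15, 13, 14, 12, 16],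
  [7, 4, 5, 6, 8, 0, 11, 13, 16, 10, 14, 12, 15, 9],
  [5, 6, 7, 8, 9, 11, 0, 12, 13, 14, 15, 16, 17, 10],
  [6, 7, 8, 5, 10, 13, 12, 0, 9, 11, 16, 17, 14, 15],
  [8, 12, 10, 14, 11, 16, 13, 9, 0, 17, 19, 15, 18, 20],
  [13, 8, 12, 9, 15, 10, 14, 11, 17, 0, 18, 20, 16, 19],
  [9, 10, 11, 12, 13, 14, 15, 16, 19, 18, 0, 21, 20, 17],
  [10, 13, 9, 11, 14, 12, 16, 17, 15, 20, 21, 0, 19, 18],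
  [11, 9, 13, 10, 12, 15, 17, 14, 18, 16, 20, 19, 0, 21],
  [12, 11, 14, 13, 16, 9, 10, 15, 20, 19, 17, 18, 21, 0]]

def baseList : List ℕ := [1, 1, 2, 2, 4, 4, 5, 5, 8, 8, 9, 9, 9, 9]

def colFun (u v : Fin 14) : ℕ := ((colTable.getD u.val []).getD v.val 0)

lemma colFun_symm : ∀ u v : Fin 14, colFun u v = colFun v u := by decide

def goodColoring : Sym2 (Fin 14) → ℕ := Sym2.lift ⟨colFun, colFun_symm⟩

def baseFun (v : Fin 14) : ℕ := baseList.getD v.val 0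

lemma goodColoring_eq (u v : Fin 14) : goodColoring s(u, v) = colFun u v := rfl

lemma good_proper : ∀ u v w : Fin 14, u ≠ v → u ≠ w → v ≠ w →
    goodColoring s(u, v) ≠ goodColoring s(u, w) := by decide

lemma good_range : ∀ u v : Fin 14, u ≠ v → goodColoring s(u, v) ∈ Finset.Icc 1 21 := by
  decide

lemma good_bounds : ∀ v u : Fin 14, u ≠ v →
    baseFun v ≤ goodColoring s(u, v) ∧ goodColoring s(u, v) ≤ baseFun v + 12 := by decide

lemma good_surj : ∀ k ∈ Finset.Icc 1 21,
    ∃ u v : Fin 14, u ≠ v ∧ goodColoring s(u, v) = k := by decide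

lemma good_spec : ∀ v : Fin 14, ∀ k ∈ Finset.Icc (baseFun v) (baseFun v + 12),
    ∃ u : Fin 14, u ≠ v ∧ goodColoring s(u, v) = k := by decide

lemma good_is : IsIntervalColoring 14 21 goodColoring := by
  refine ⟨good_proper, good_range, ?_, ?_⟩
  · intro k h1 h2
    exact good_surj k (Finset.mem_Icc.2 ⟨h1, h2⟩)
  · intro v
    refine ⟨baseFun v, baseFun v + 12, ?_⟩
    ext k
    simp only [Set.mem_setOf_eq, Set.mem_Icc]
    constructor
    · rintro ⟨u, hu, rfl⟩
      exact good_bounds v u hu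
    · intro hk
      exact good_spec v k (Finset.mem_Icc.2 hk)

/-- `W(K_{14}) = 21`: `K_{14}` has an interval 21-coloring but no interval
22-coloring. -/
theorem statement_10 :
    W 14 = 21 ∧
    (∃ c : Sym2 (Fin 14) → ℕ, IsIntervalColoring 14 21 c) ∧
    (∀ c : Sym2 (Fin 14) → ℕ, ¬ IsIntervalColoring 14 22 c) := by
  have h21 : ∃ c : Sym2 (Fin 14) → ℕ, IsIntervalColoring 14 21 c := ⟨goodColoring, good_is⟩
  refine ⟨?_, h21, no22⟩
  have key : ∀ d : ℕ, ∀ c : Sym2 (Fin 14) → ℕ, IsIntervalColoring 14 (22 + d) c →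
      ∃ c' : Sym2 (Fin 14) → ℕ, IsIntervalColoring 14 22 c' := by
    intro d
    induction d with
    | zero => exact fun c hc => ⟨c, hc⟩
    | succ n ih =>
      intro c hc
      obtain ⟨c', hc'⟩ := descent (t := 22 + n) (by omega) hc
      exact ih c' hc'
  have hgreat : IsGreatest {t : ℕ | ∃ c : Sym2 (Fin 14) → ℕ, IsIntervalColoring 14 t c} 21 := by
    constructor
    · exact h21
    · intro t ht
      by_contra hgt
      push_neg at hgt
      obtain ⟨c, hc⟩ := ht
      have h22 : IsIntervalColoring 14 (22 + (t - 22)) c := by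
        rwa [show 22 + (t - 22) = t from by omega]
      obtain ⟨c', hc'⟩ := key (t - 22) c h22
      exact no22 c' hc'
  exact hgreat.csSup_eq
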